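/- For every prime power q ≥ 3, with N(q) defined as the largest n such that a code C ⊆ F_q^n of size q^(⌊n/2⌋) with pairwise Hamming distance at least ⌈n/2⌉ + 1 exists, one has q + 1 ≤ N(q) ≤ 2q - 2. -/

import Mathlib

open Finset Polynomial

section AME
variable {F : Type} [Field F] [Fintype F] [DecidableEq F]

private lemma count_eq_one {q n k : ℕ} (hq : 0 < q) (hF : Fintype.card F = q) (hk : k ≤ n)
    (C : Finset (Fin n → F)) (hcard : C.card = q ^ k)
    (hdist : ∀ w ∈ C, ∀ w' ∈ C, w ≠ w' → n - k + 1 ≤ hammingDist w w')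
    (s : Finset (Fin n)) (hs : s.card = k) (g : Fin n → F) :
    (C.filter fun w => ∀ i ∈ s, w i = g i).card = 1 := by
  classical
  set φ : (Fin n → F) → (↥s → F) := fun w i => w i.1 with hφ
  -- each fiber has at most one element
  have hfib : ∀ g' : ↥s → F, (C.filter fun w => φ w = g').card ≤ 1 := by
    intro g'
    refine Finset.card_le_one.2 ?_
    intro w hw w' hw'
    simp only [mem_filter] at hw hw'
    by_contra hne
    have hd := hdist w hw.1 w' hw'.1 hne
    have hsub : ({i | w i ≠ w' i} : Finset (Fin n)) ⊆ sᶜ := by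
      intro i hi
      simp only [Finset.mem_filter, Finset.mem_univ, true_and] at hi
      simp only [Finset.mem_compl]
      intro his
      exact hi (by
        have := congrFun (hw.2.trans hw'.2.symm) ⟨i, his⟩
        exact this)
    have hle : hammingDist w w' ≤ n - k := by
      have := Finset.card_le_card hsub
      simpa [hammingDist, Finset.card_compl, hs] using this
    omega
  have hsum : ∑ g' : ↥s → F, (C.filter fun w => φ w = g').card = C.card :=
    (Finset.card_eq_sum_card_fiberwise (fun w _ => Finset.mem_univ (φ w))).symm
  have hcardfun : Fintype.card (↥s → F) = q ^ k := by
    rw [Fintype.card_fun, hF, Fintype.card_coe, hs]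
  -- all fibers are exactly 1
  have hall : ∀ g' : ↥s → F, (C.filter fun w => φ w = g').card = 1 := by
    by_contra hBad
    push_neg at hBad
    obtain ⟨g₀, hg₀⟩ := hBad
    have hg₀0 : (C.filter fun w => φ w = g₀).card = 0 := by
      have := hfib g₀; omega
    have : C.card < q ^ k := by
      rw [← hsum]
      calc ∑ g' : ↥s → F, (C.filter fun w => φ w = g').card
          = ∑ g' ∈ (Finset.univ.erase g₀), (C.filter fun w => φ w = g').card := by
            exact (Finset.sum_erase (f := fun g' => (C.filter fun w => φ w = g').card) _ hg₀0).symm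
        _ ≤ ∑ g' ∈ (Finset.univ.erase g₀), 1 := Finset.sum_le_sum (fun g' _ => hfib g')
        _ = (Finset.univ.erase g₀).card := by simp
        _ < Fintype.card (↥s → F) := by
            rw [Finset.card_erase_of_mem (Finset.mem_univ g₀)]
            have : 0 < Fintype.card (↥s → F) := Fintype.card_pos
            simp only [Finset.card_univ]; omega
        _ = q ^ k := hcardfun
    omega
  have := hall (fun i => g i.1)
  rw [← this]
  congr 1
  apply Finset.filter_congr
  intro w _
  simp only [hφ, funext_iff, Subtype.forall]

private lemma upper_bound {q n : ℕ} (hq : 3 ≤ q) (hF : Fintype.card F = q)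
    (C : Finset (Fin n → F)) (hcard : C.card = q ^ (n / 2))
    (hdist : ∀ w ∈ C, ∀ w' ∈ C, w ≠ w' → (n + 1) / 2 + 1 ≤ hammingDist w w') :
    n ≤ 2 * q - 2 := by
  classical
  by_contra hn
  push_neg at hn
  have hn' : 2 * q - 1 ≤ n := by omega
  set k := n / 2 with hk
  have hk2 : 2 ≤ k := by omega
  have hkn : k ≤ n := by omega
  have hq0 : 0 < q := by omega
  have hdist' : ∀ w ∈ C, ∀ w' ∈ C, w ≠ w' → n - k + 1 ≤ hammingDist w w' := by
    intro w hw w' hw' hne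
    have := hdist w hw w' hw' hne
    omega
  have key0 := fun s hs g => count_eq_one hq0 hF hkn C hcard hdist' s hs g
  -- fixed coordinate set of size k - 2
  obtain ⟨sfix, -, hsfix⟩ := Finset.exists_subset_card_eq (s := (Finset.univ : Finset (Fin n)))
    (n := k - 2) (by simp; omega)
  obtain ⟨c, hc⟩ : C.Nonempty := Finset.card_pos.1 (by rw [hcard]; positivity)
  set C' := C.filter (fun w => ∀ i ∈ sfix, w i = c i) with hC'
  -- key: any two free coordinates determine a unique codeword of C'
  have key : ∀ j ∉ sfix, ∀ j' ∉ sfix, j ≠ j' → ∀ a b : F,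
      (C'.filter fun w => w j = a ∧ w j' = b).card = 1 := by
    intro j hj j' hj' hjj' a b
    set s : Finset (Fin n) := insert j (insert j' sfix) with hsdef
    have hjnot : j ∉ insert j' sfix := by
      simp only [Finset.mem_insert]; push_neg; exact ⟨hjj', hj⟩
    have hscard : s.card = k := by
      rw [hsdef, Finset.card_insert_of_notMem hjnot, Finset.card_insert_of_notMem hj', hsfix]
      omega
    set g : Fin n → F := fun i => if i = j then a else if i = j' then b else c i with hg
    have := key0 s hscard g
    rw [← this]
    rw [hC', Finset.filter_filter]
    congr 1
    apply Finset.filter_congr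
    intro w _
    simp only [hsdef, Finset.mem_insert]
    constructor
    · rintro ⟨hfix, hwj, hwj'⟩ i hi
      rcases hi with rfl | rfl | hi
      · rw [hg]; simp [hwj]
      · rw [hg]; simp [hjj'.symm, hwj']
      · have h1 : i ≠ j := fun h => hj (h ▸ hi)
        have h2 : i ≠ j' := fun h => hj' (h ▸ hi)
        rw [hg]; simp [h1, h2, hfix i hi]
    · intro h
      refine ⟨fun i hi => ?_, ?_, ?_⟩
      · have h1 : i ≠ j := fun hh => hj (hh ▸ hi)
        have h2 : i ≠ j' := fun hh => hj' (hh ▸ hi)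
        have := h i (Or.inr (Or.inr hi))
        simpa [hg, h1, h2] using this
      · have := h j (Or.inl rfl); simpa [hg] using this
      · have := h j' (Or.inr (Or.inl rfl))
        simpa [hg, Ne.symm hjj'] using this
  -- count: for a free coordinate, each value is taken exactly q times in C'
  have countq : ∀ j ∉ sfix, ∀ j' ∉ sfix, j ≠ j' → ∀ a : F,
      (C'.filter fun w => w j = a).card = q := by
    intro j hj j' hj' hjj' a
    have hfib : (C'.filter fun w => w j = a).card
        = ∑ b : F, ((C'.filter fun w => w j = a).filter fun w => w j' = b).card :=
      Finset.card_eq_sum_card_fiberwise (fun w _ => Finset.mem_univ _)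
    rw [hfib]
    have : ∀ b : F, ((C'.filter fun w => w j = a).filter fun w => w j' = b).card = 1 := by
      intro b
      rw [Finset.filter_filter]
      exact key j hj j' hj' hjj' a b
    rw [Finset.sum_congr rfl (fun b _ => this b)]
    simp [hF]
  -- C' has q^2 elements
  have hfreecard : (sfixᶜ : Finset (Fin n)).card = n - (k - 2) := by
    rw [Finset.card_compl, hsfix]; simp
  have hfree2 : 2 ≤ (sfixᶜ : Finset (Fin n)).card := by rw [hfreecard]; omega
  obtain ⟨j₀, hj₀, j₁, hj₁, hj01⟩ := Finset.one_lt_card.1 (by omega : 1 < (sfixᶜ : Finset (Fin n)).card)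
  rw [Finset.mem_compl] at hj₀ hj₁
  have hC'card : C'.card = q * q := by
    have hfib : C'.card = ∑ a : F, (C'.filter fun w => w j₀ = a).card :=
      Finset.card_eq_sum_card_fiberwise (fun w _ => Finset.mem_univ _)
    rw [hfib, Finset.sum_congr rfl (fun a _ => countq j₀ hj₀ j₁ hj₁ hj01 a)]
    simp [hF]
  -- double counting
  set free := (sfixᶜ : Finset (Fin n)) with hfreedef
  set P : Fin n → Finset ((Fin n → F) × (Fin n → F)) :=
    fun j => (C' ×ˢ C').filter (fun p => p.1 ≠ p.2 ∧ p.1 j = p.2 j) with hP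
  -- lower bound on each P j for j free
  have hPj : ∀ j ∈ free, (P j).card = q * (q * q - q) := by
    intro j hjf
    have hjnot : j ∉ sfix := Finset.mem_compl.1 hjf
    obtain ⟨j', hj'f, hj'ne⟩ : ∃ j' ∈ free, j' ≠ j := by
      obtain ⟨x, hx, y, hy, hxy⟩ := Finset.one_lt_card.1 (by omega : 1 < free.card)
      by_cases hxj : x = j
      · exact ⟨y, hy, by rw [← hxj]; exact hxy.symm⟩
      · exact ⟨x, hx, hxj⟩
    have hj'not : j' ∉ sfix := Finset.mem_compl.1 hj'f
    have hfib : (P j).card = ∑ a : F, ((P j).filter fun p => p.1 j = a).card :=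
      Finset.card_eq_sum_card_fiberwise (fun w _ => Finset.mem_univ _)
    rw [hfib]
    have heach : ∀ a : F, ((P j).filter fun p => p.1 j = a).card = q * q - q := by
      intro a
      have hset : (P j).filter (fun p => p.1 j = a)
          = (C'.filter fun w => w j = a).offDiag := by
        ext p
        simp only [hP, Finset.mem_filter, Finset.mem_product, Finset.mem_offDiag]
        constructor
        · rintro ⟨⟨⟨h1, h2⟩, hne, hagree⟩, ha⟩
          exact ⟨⟨h1, ha⟩, ⟨h2, hagree ▸ ha⟩, hne⟩
        · rintro ⟨⟨h1, ha⟩, ⟨h2, ha'⟩, hne⟩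
          exact ⟨⟨⟨h1, h2⟩, hne, ha.trans ha'.symm⟩, ha⟩
      rw [hset, Finset.offDiag_card, countq j hjnot j' hj'not (Ne.symm hj'ne) a]
    rw [Finset.sum_congr rfl (fun a _ => heach a)]
    simp [hF, Finset.card_univ]
  have hT1 : ∑ j ∈ free, (P j).card = free.card * (q * (q * q - q)) := by
    rw [Finset.sum_congr rfl hPj, Finset.sum_const, smul_eq_mul]
  -- upper bound on the total
  have hT2 : ∑ j ∈ free, (P j).card ≤ (q * q) * (q * q) := by
    have hswap : ∑ j ∈ free, (P j).card
        = ∑ p ∈ C' ×ˢ C', (free.filter fun j => p.1 ≠ p.2 ∧ p.1 j = p.2 j).card := by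
      simp only [hP, Finset.card_filter]
      rw [Finset.sum_comm]
    rw [hswap]
    have hbound : ∀ p ∈ C' ×ˢ C',
        (free.filter fun j => p.1 ≠ p.2 ∧ p.1 j = p.2 j).card ≤ 1 := by
      rintro ⟨w, w'⟩ hp
      simp only [Finset.mem_product] at hp
      by_cases hne : w = w'
      · simp [hne]
      · have hw : w ∈ C := (Finset.mem_filter.1 hp.1).1
        have hw' : w' ∈ C := (Finset.mem_filter.1 hp.2).1
        have hwfix := (Finset.mem_filter.1 hp.1).2
        have hw'fix := (Finset.mem_filter.1 hp.2).2
        have hd := hdist w hw w' hw' hne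
        set A : Finset (Fin n) := Finset.univ.filter (fun i => w i = w' i) with hA
        have hAcard : A.card + hammingDist w w' = n := by
          have := Finset.card_filter_add_card_filter_not
            (s := (Finset.univ : Finset (Fin n))) (p := fun i => w i = w' i)
          simp only [Finset.card_univ, Fintype.card_fin] at this
          rw [hA]
          have hh : hammingDist w w' = (Finset.univ.filter (fun i => ¬ w i = w' i)).card := by
            rfl
          rw [hh]
          exact this
        have hAle : A.card ≤ k - 1 := by omega
        have hsfixA : sfix ⊆ A := by
          intro i hi
          simp only [hA, Finset.mem_filter, Finset.mem_univ, true_and]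
          rw [hwfix i hi, hw'fix i hi]
        have hsub : (free.filter fun j => w ≠ w' ∧ w j = w' j) ⊆ A \ sfix := by
          intro j hj
          simp only [Finset.mem_filter, hfreedef, Finset.mem_compl] at hj
          simp only [Finset.mem_sdiff, hA, Finset.mem_filter, Finset.mem_univ, true_and]
          exact ⟨hj.2.2, hj.1⟩
        calc (free.filter fun j => (w, w').1 ≠ (w, w').2 ∧ (w, w').1 j = (w, w').2 j).card
            ≤ (A \ sfix).card := Finset.card_le_card hsub
          _ = A.card - sfix.card := Finset.card_sdiff_of_subset hsfixA
          _ ≤ 1 := by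
              have := Finset.card_le_card hsfixA
              rw [hsfix] at *
              omega
    calc ∑ p ∈ C' ×ˢ C', (free.filter fun j => p.1 ≠ p.2 ∧ p.1 j = p.2 j).card
        ≤ ∑ _p ∈ C' ×ˢ C', 1 := Finset.sum_le_sum hbound
      _ = (C' ×ˢ C').card := by simp
      _ = (q * q) * (q * q) := by rw [Finset.card_product, hC'card]
  -- combine
  have hfreelb : q + 2 ≤ free.card := by rw [hfreedef, hfreecard]; omega
  have hmain : free.card * (q * (q * q - q)) ≤ (q * q) * (q * q) := hT1 ▸ hT2
  obtain ⟨r, rfl⟩ : ∃ r, q = r + 3 := ⟨q - 3, by omega⟩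
  have hsub : (r + 3) * (r + 3) - (r + 3) = (r + 3) * (r + 2) := by
    apply Nat.sub_eq_of_eq_add; ring
  rw [hsub] at hmain
  have h2 : (r + 5) * ((r + 3) * ((r + 3) * (r + 2))) ≤ (r + 3) * (r + 3) * ((r + 3) * (r + 3)) :=
    le_trans (Nat.mul_le_mul_right _ hfreelb) hmain
  nlinarith [h2]

private lemma lower_bound {q : ℕ} (hq : 3 ≤ q) (hF : Fintype.card F = q) :
    ∃ C : Finset (Fin (q + 1) → F), C.card = q ^ ((q + 1) / 2) ∧
      ∀ w ∈ C, ∀ w' ∈ C, w ≠ w' → (q + 1 + 1) / 2 + 1 ≤ hammingDist w w' := by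
  classical
  set k := (q + 1) / 2 with hkdef
  have hk2 : 2 ≤ k := by omega
  have hkq : k ≤ q := by omega
  have e : Fin q ≃ F := (Fintype.equivFinOfCardEq hF).symm
  set P : (Fin k → F) → F[X] := fun v => ∑ t : Fin k, Polynomial.C (v t) * X ^ (t : ℕ) with hPdef
  have hcoeff : ∀ (v : Fin k → F) (t : ℕ) (ht : t < k), (P v).coeff t = v ⟨t, ht⟩ := by
    intro v t ht
    rw [hPdef]
    simp only [finset_sum_coeff, coeff_C_mul, coeff_X_pow]
    rw [Finset.sum_eq_single (⟨t, ht⟩ : Fin k)]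
    · simp
    · intro t' _ hne
      have : (t' : ℕ) ≠ t := fun h => hne (Fin.ext h)
      simp [Ne.symm this]
    · simp
  have hdeg : ∀ v : Fin k → F, (P v).natDegree ≤ k - 1 := by
    intro v
    apply Polynomial.natDegree_sum_le_of_forall_le
    intro t _
    exact le_trans (natDegree_C_mul_le _ _) (by simp [Nat.lt_succ_iff, Fin.is_lt, Nat.le_sub_one_of_lt t.is_lt])
  have hPinj : Function.Injective P := by
    intro v v' h
    funext t
    have := hcoeff v t t.is_lt
    rw [h, hcoeff v' t t.is_lt] at this
    simpa using this.symm
  set Φ : (Fin k → F) → (Fin (q + 1) → F) := fun v i =>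
    if h : (i : ℕ) < q then (P v).eval (e ⟨(i : ℕ), h⟩) else v ⟨k - 1, by omega⟩ with hΦdef
  -- agreement bound
  have hagree : ∀ v v' : Fin k → F, v ≠ v' →
      (Finset.univ.filter fun i : Fin (q + 1) => Φ v i = Φ v' i).card ≤ k - 1 := by
    intro v v' hne
    set D := P v - P v' with hDdef
    have hD : D ≠ 0 := sub_ne_zero.2 (fun h => hne (hPinj h))
    have hDdeg : D.natDegree ≤ k - 1 :=
      le_trans (natDegree_sub_le _ _) (by simp [hdeg v, hdeg v'])
    set A := Finset.univ.filter fun i : Fin (q + 1) => Φ v i = Φ v' i with hA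
    -- the small-index part of A injects into the roots of D
    have hroots : ∀ m : ℕ, D.natDegree ≤ m → (A.filter fun i : Fin (q+1) => (i : ℕ) < q).card ≤ m := by
      intro m hm
      have hmap : ∀ i ∈ A.filter fun i : Fin (q+1) => (i : ℕ) < q,
          (if h : (i : ℕ) < q then e ⟨(i : ℕ), h⟩ else e ⟨0, by omega⟩) ∈ D.roots.toFinset := by
        intro i hi
        simp only [Finset.mem_filter, hA, Finset.mem_univ, true_and] at hi
        obtain ⟨hagr, hlt⟩ := hi
        rw [dif_pos hlt]
        rw [Multiset.mem_toFinset, mem_roots hD]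
        have : (P v).eval (e ⟨(i : ℕ), hlt⟩) = (P v').eval (e ⟨(i : ℕ), hlt⟩) := by
          have h1 := hagr
          rw [hΦdef] at h1
          simpa [dif_pos hlt] using h1
        simp [IsRoot, hDdef, eval_sub, this]
      have hinj : Set.InjOn (fun i : Fin (q+1) => if h : (i : ℕ) < q then e ⟨(i : ℕ), h⟩ else e ⟨0, by omega⟩)
          (A.filter fun i : Fin (q+1) => (i : ℕ) < q) := by
        intro i hi i' hi' heq
        simp only [Finset.coe_filter, Set.mem_setOf_eq] at hi hi'
        simp only [dif_pos hi.2, dif_pos hi'.2] at heq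
        exact Fin.ext (by simpa using congrArg Fin.val (e.injective heq))
      calc (A.filter fun i : Fin (q+1) => (i : ℕ) < q).card
          ≤ D.roots.toFinset.card := Finset.card_le_card_of_injOn _ hmap hinj
        _ ≤ Multiset.card D.roots := Multiset.toFinset_card_le _
        _ ≤ D.natDegree := Polynomial.card_roots' D
        _ ≤ m := hm
    have hbig : (A.filter fun i : Fin (q+1) => ¬ (i : ℕ) < q).card ≤ 1 := by
      apply Finset.card_le_one.2
      intro i hi i' hi'
      simp only [Finset.mem_filter] at hi hi'
      have h1 : (i : ℕ) = q := by omega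
      have h2 : (i' : ℕ) = q := by omega
      exact Fin.ext (h1.trans h2.symm)
    have hsplit : (A.filter fun i : Fin (q+1) => (i : ℕ) < q).card + (A.filter fun i : Fin (q+1) => ¬ (i : ℕ) < q).card
        = A.card := Finset.card_filter_add_card_filter_not _
    by_cases hlast : v ⟨k - 1, by omega⟩ = v' ⟨k - 1, by omega⟩
    · -- deg ≤ k - 2 case
      have hc0 : D.coeff (k - 1) = 0 := by
        rw [hDdef, coeff_sub, hcoeff v (k-1) (by omega), hcoeff v' (k-1) (by omega)]
        rw [sub_eq_zero]
        exact hlast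
      have hdeg2 : D.natDegree ≤ k - 2 := by
        by_contra hcon
        push_neg at hcon
        have hdn : D.natDegree = k - 1 := by omega
        have hlc := Polynomial.leadingCoeff_ne_zero.mpr hD
        rw [Polynomial.leadingCoeff, hdn] at hlc
        exact hlc hc0
      have := hroots (k - 2) hdeg2
      omega
    · -- last coordinates differ
      have hempty : (A.filter fun i : Fin (q+1) => ¬ (i : ℕ) < q).card = 0 := by
        rw [Finset.card_eq_zero, Finset.filter_eq_empty_iff]
        intro i hiA
        simp only [hA, Finset.mem_filter, Finset.mem_univ, true_and] at hiA
        intro hnot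
        apply hlast
        have h1 := hiA
        rw [hΦdef] at h1
        simpa [dif_neg hnot] using h1
      have := hroots (k - 1) hDdeg
      omega
  -- the code
  refine ⟨Finset.image Φ Finset.univ, ?_, ?_⟩
  · have hΦinj : Function.Injective Φ := by
      intro v v' h
      by_contra hne
      have := hagree v v' hne
      have hall : (Finset.univ.filter fun i : Fin (q + 1) => Φ v i = Φ v' i) = Finset.univ := by
        rw [Finset.filter_eq_self]; intro i _; rw [h]
      rw [hall] at this
      simp only [Finset.card_univ, Fintype.card_fin] at this
      omega
    rw [Finset.card_image_of_injective _ hΦinj, Finset.card_univ, Fintype.card_fun, hF]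
    simp [hkdef]
  · intro w hw w' hw' hneq
    obtain ⟨v, -, rfl⟩ := Finset.mem_image.1 hw
    obtain ⟨v', -, rfl⟩ := Finset.mem_image.1 hw'
    have hvv : v ≠ v' := fun h => hneq (by rw [h])
    have hA := hagree v v' hvv
    have hsplit : (Finset.univ.filter fun i : Fin (q + 1) => Φ v i = Φ v' i).card
        + (Finset.univ.filter fun i : Fin (q + 1) => ¬ Φ v i = Φ v' i).card = q + 1 := by
      have := Finset.card_filter_add_card_filter_not
        (s := (Finset.univ : Finset (Fin (q+1)))) (p := fun i => Φ v i = Φ v' i)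
      simpa using this
    have hh : hammingDist (Φ v) (Φ v') = (Finset.univ.filter fun i : Fin (q + 1) => ¬ Φ v i = Φ v' i).card := rfl
    omega

end AME


/-- For a finite field `F` with `q ≥ 3` elements, the largest `n` for which a
code `C ⊆ F^n` of size `q ^ ⌊n/2⌋` with pairwise Hamming distance at least
`⌈n/2⌉ + 1` exists is well defined and satisfies `q + 1 ≤ N(q) ≤ 2q - 2`. -/
theorem N_bounds (q : ℕ) (F : Type) [Field F] [Fintype F] [DecidableEq F]
    (hF : Fintype.card F = q) (hq : 3 ≤ q) :
    ∃ N : ℕ,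
      IsGreatest {n : ℕ | ∃ C : Finset (Fin n → F), C.card = q ^ (n / 2) ∧
        ∀ w ∈ C, ∀ w' ∈ C, w ≠ w' → (n + 1) / 2 + 1 ≤ hammingDist w w'} N ∧
      q + 1 ≤ N ∧ N ≤ 2 * q - 2 := by
  set S := {n : ℕ | ∃ C : Finset (Fin n → F), C.card = q ^ (n / 2) ∧
      ∀ w ∈ C, ∀ w' ∈ C, w ≠ w' → (n + 1) / 2 + 1 ≤ hammingDist w w'} with hS
  have hmem : (q + 1) ∈ S := by
    obtain ⟨C, h1, h2⟩ := lower_bound hq hF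
    exact ⟨C, h1, h2⟩
  have hub : ∀ n ∈ S, n ≤ 2 * q - 2 := by
    rintro n ⟨C, h1, h2⟩
    exact upper_bound hq hF C h1 h2
  have hbdd : BddAbove S := ⟨2 * q - 2, fun n hn => hub n hn⟩
  have hne : S.Nonempty := ⟨q + 1, hmem⟩
  have hmax : sSup S ∈ S := Nat.sSup_mem hne hbdd
  refine ⟨sSup S, ⟨hmax, fun n hn => le_csSup hbdd hn⟩, le_csSup hbdd hmem, hub _ hmax⟩
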